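/- For any connected graph G on n ≥ 2 vertices, γ(G) = n / max_{u ∈ V(G)} tr(u), where tr(u) is the sum of distances from u to all other vertices. -/

import Mathlib

open Finset SimpleGraph

/-- `max_{uv ∈ E(G)} |x_u - x_v|` (as a real supremum over adjacent pairs). -/
noncomputable def edgeSup {V : Type*} (G : SimpleGraph V) (x : V → ℝ) : ℝ :=
  ⨆ p : {p : V × V // G.Adj p.1 p.2}, |x p.1.1 - x p.1.2|

/-- The `l_∞`-smoothing parameter `γ(G)`. -/
noncomputable def gamma {V : Type*} [Fintype V] (G : SimpleGraph V) : ℝ :=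
  sInf {y | ∃ x : V → ℝ, (∑ v, x v) = 0 ∧ (⨆ v, |x v|) = 1 ∧ y = edgeSup G x}

/-- Transmission of a vertex: sum of graph distances to all vertices. -/
noncomputable def transmission {V : Type*} [Fintype V] (G : SimpleGraph V) (u : V) : ℕ :=
  ∑ v, G.dist u v

private lemma walk_bound {V : Type*} (G : SimpleGraph V) (x : V → ℝ) (S : ℝ)
    (h : ∀ a b, G.Adj a b → |x a - x b| ≤ S) :
    ∀ {u v : V} (p : G.Walk u v), |x u - x v| ≤ p.length * S := by
  intro u v p
  induction p with
  | nil => simp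
  | cons hadj q ih =>
    rename_i a b c
    calc |x a - x c| ≤ |x a - x b| + |x b - x c| := abs_sub_le (x a) (x b) (x c)
      _ ≤ S + q.length * S := add_le_add (h a b hadj) ih
      _ = _ := by push_cast [SimpleGraph.Walk.length_cons]; ring

theorem stmt4 {V : Type*} [Fintype V] (G : SimpleGraph V) (hc : G.Connected)
    (hn : 2 ≤ Fintype.card V) :
    gamma G = (Fintype.card V : ℝ) / ((Finset.univ.sup (transmission G) : ℕ) : ℝ) := by
  classical
  have hne : Nonempty V := Fintype.card_pos_iff.mp (by omega)
  obtain ⟨a0, b0, hab⟩ := Fintype.exists_pair_of_one_lt_card (α := V) (by omega)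
  set n := Fintype.card V with hn'
  set T := Finset.univ.sup (transmission G) with hT'
  -- positivity of T
  have hTpos : 0 < T := by
    have h1 : 0 < G.dist a0 b0 := hc.pos_dist_of_ne hab
    have h2 : G.dist a0 b0 ≤ transmission G a0 :=
      Finset.single_le_sum (f := fun v => G.dist a0 v) (fun _ _ => Nat.zero_le _)
        (Finset.mem_univ b0)
    exact lt_of_lt_of_le (lt_of_lt_of_le h1 h2)
      (Finset.le_sup (Finset.mem_univ a0))
  have hTR : (0:ℝ) < (T:ℝ) := by exact_mod_cast hTpos
  -- nonempty adjacency index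
  have hadjne : Nonempty {p : V × V // G.Adj p.1 p.2} := by
    obtain ⟨p, hp⟩ := hc.exists_walk_length_eq_dist a0 b0
    cases p with
    | nil => exact absurd rfl hab
    | cons h q => exact ⟨⟨(_, _), h⟩⟩
  have hbdd : ∀ x : V → ℝ, BddAbove (Set.range
      fun p : {p : V × V // G.Adj p.1 p.2} => |x p.1.1 - x p.1.2|) :=
    fun x => (Set.finite_range _).bddAbove
  have hedge_le : ∀ (x : V → ℝ) (S : ℝ),
      (∀ a b, G.Adj a b → |x a - x b| ≤ S) → edgeSup G x ≤ S := by
    intro x S h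
    exact ciSup_le fun p => h p.1.1 p.1.2 p.2
  have hle_edge : ∀ (x : V → ℝ) {a b : V}, G.Adj a b → |x a - x b| ≤ edgeSup G x := by
    intro x a b h
    exact le_ciSup (hbdd x) (⟨(a, b), h⟩ : {p : V × V // G.Adj p.1 p.2})
  -- the n * dist u w ≤ tr u + tr w inequality
  have htri : ∀ u w : V, n * G.dist u w ≤ transmission G u + transmission G w := by
    intro u w
    have : ∀ v : V, G.dist u w ≤ G.dist u v + G.dist w v := by
      intro v
      calc G.dist u w ≤ G.dist u v + G.dist v w := hc.dist_triangle
        _ = G.dist u v + G.dist w v := by rw [SimpleGraph.dist_comm (u := v)]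
    calc n * G.dist u w = ∑ _v : V, G.dist u w := by simp [hn', mul_comm]
      _ ≤ ∑ v : V, (G.dist u v + G.dist w v) := Finset.sum_le_sum fun v _ => this v
      _ = transmission G u + transmission G w := by
          rw [Finset.sum_add_distrib]; rfl
  -- lower bound
  have hlow : ∀ x : V → ℝ, (∑ v, x v) = 0 → (⨆ v, |x v|) = 1 →
      (n : ℝ) / (T : ℝ) ≤ edgeSup G x := by
    intro x hsum hsup
    set S := edgeSup G x with hS
    have hS0 : 0 ≤ S := le_trans (abs_nonneg _)
      (hle_edge x (Classical.choice hadjne).2)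
    -- a vertex attaining the sup
    obtain ⟨v0, hv0⟩ := Finite.exists_max fun v => |x v|
    have hxv0 : |x v0| = 1 := by
      rw [← hsup]
      exact le_antisymm (le_ciSup (f := fun v => |x v|) (Set.finite_range _).bddAbove v0) (ciSup_le hv0)
    have hdist : ∀ w, |x v0 - x w| ≤ (G.dist v0 w : ℝ) * S := by
      intro w
      obtain ⟨p, hp⟩ := hc.exists_walk_length_eq_dist v0 w
      have := walk_bound G x S (fun a b hab' => hle_edge x hab') p
      rwa [hp] at this
    have key : (n : ℝ) ≤ (transmission G v0 : ℝ) * S := by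
      have h1 : (n : ℝ) = |∑ w, (x v0 - x w)| := by
        rw [Finset.sum_sub_distrib, hsum, sub_zero, Finset.sum_const, Finset.card_univ,
          nsmul_eq_mul, abs_mul, hxv0, Nat.abs_cast, mul_one]
      rw [h1]
      calc |∑ w, (x v0 - x w)| ≤ ∑ w, |x v0 - x w| := Finset.abs_sum_le_sum_abs _ _
        _ ≤ ∑ w, (G.dist v0 w : ℝ) * S := Finset.sum_le_sum fun w _ => hdist w
        _ = (transmission G v0 : ℝ) * S := by
            rw [← Finset.sum_mul, transmission]; push_cast; ring
    rw [div_le_iff₀ hTR]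
    calc (n : ℝ) ≤ (transmission G v0 : ℝ) * S := key
      _ ≤ (T : ℝ) * S := by
          apply mul_le_mul_of_nonneg_right _ hS0
          exact_mod_cast Finset.le_sup (Finset.mem_univ v0)
      _ = S * T := mul_comm _ _
  -- the witness for the upper bound
  obtain ⟨u, -, hu⟩ := Finset.exists_mem_eq_sup Finset.univ Finset.univ_nonempty
    (transmission G)
  have hu' : (T : ℝ) = (transmission G u : ℝ) := by rw [hT', hu]
  set x : V → ℝ := fun w => (n : ℝ) * (G.dist u w : ℝ) / (T : ℝ) - 1 with hx
  have hxu : x u = -1 := by simp [hx]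
  have hxle : ∀ w, |x w| ≤ 1 := by
    intro w
    rw [abs_le]
    constructor
    · have : (0:ℝ) ≤ (n : ℝ) * (G.dist u w : ℝ) / (T : ℝ) := by positivity
      simp only [hx]; linarith
    · have h2 : (n : ℝ) * (G.dist u w : ℝ) ≤ 2 * (T : ℝ) := by
        have := htri u w
        have hw : transmission G w ≤ T := Finset.le_sup (Finset.mem_univ w)
        have hu2 : transmission G u = T := hu.symm
        have : n * G.dist u w ≤ 2 * T := by omega
        exact_mod_cast this
      simp only [hx]
      have h3 : (n : ℝ) * (G.dist u w : ℝ) / (T : ℝ) ≤ 2 := by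
        rw [div_le_iff₀ hTR]; linarith
      linarith
  have hsum : (∑ v, x v) = 0 := by
    simp only [hx]
    rw [Finset.sum_sub_distrib]
    have : ∑ v : V, (n : ℝ) * (G.dist u v : ℝ) / (T : ℝ)
        = (n : ℝ) * (transmission G u : ℝ) / (T : ℝ) := by
      rw [← Finset.sum_div, ← Finset.mul_sum, transmission]; push_cast; ring
    rw [this, ← hu', Finset.sum_const, Finset.card_univ]
    field_simp
    simp [hn']
  have hsup : (⨆ v, |x v|) = 1 := by
    apply le_antisymm (ciSup_le hxle)
    have : (1:ℝ) = |x u| := by rw [hxu]; simp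
    rw [this]
    exact le_ciSup (f := fun v => |x v|) (Set.finite_range _).bddAbove u
  have hedge : edgeSup G x ≤ (n : ℝ) / (T : ℝ) := by
    apply hedge_le
    intro a b hab'
    have hd1 : (G.dist u b : ℝ) ≤ (G.dist u a : ℝ) + 1 := by
      have : G.dist u b ≤ G.dist u a + G.dist a b := hc.dist_triangle
      have hone : G.dist a b = 1 := SimpleGraph.dist_eq_one_iff_adj.mpr hab'
      rw [hone] at this
      exact_mod_cast this
    have hd2 : (G.dist u a : ℝ) ≤ (G.dist u b : ℝ) + 1 := by
      have : G.dist u a ≤ G.dist u b + G.dist b a := hc.dist_triangle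
      have hone : G.dist b a = 1 := SimpleGraph.dist_eq_one_iff_adj.mpr hab'.symm
      rw [hone] at this
      exact_mod_cast this
    have : x a - x b = (n : ℝ) * ((G.dist u a : ℝ) - (G.dist u b : ℝ)) / (T : ℝ) := by
      simp only [hx]; ring
    rw [this, abs_div, abs_mul]
    rw [abs_of_nonneg (by positivity : (0:ℝ) ≤ (n:ℝ)), abs_of_pos hTR]
    have habs : |(G.dist u a : ℝ) - (G.dist u b : ℝ)| ≤ 1 :=
      abs_sub_le_iff.mpr ⟨by linarith, by linarith⟩
    calc (n : ℝ) * |(G.dist u a : ℝ) - (G.dist u b : ℝ)| / (T : ℝ)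
        ≤ (n : ℝ) * 1 / (T : ℝ) := by gcongr
      _ = (n : ℝ) / (T : ℝ) := by ring
  -- conclusion
  have hmem : edgeSup G x ∈
      {y | ∃ x : V → ℝ, (∑ v, x v) = 0 ∧ (⨆ v, |x v|) = 1 ∧ y = edgeSup G x} :=
    ⟨x, hsum, hsup, rfl⟩
  have hlb : ∀ y ∈ {y | ∃ x : V → ℝ, (∑ v, x v) = 0 ∧ (⨆ v, |x v|) = 1 ∧ y = edgeSup G x},
      (n : ℝ) / (T : ℝ) ≤ y := by
    rintro y ⟨z, h1, h2, rfl⟩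
    exact hlow z h1 h2
  rw [gamma]
  exact le_antisymm ((csInf_le ⟨(n : ℝ) / (T : ℝ), hlb⟩ hmem).trans hedge)
    (le_csInf ⟨_, hmem⟩ hlb)
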